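/- Let N be a positive integer and A ⊆ ℕ with |A ∩ [0, 2N−1]| = N, and suppose for all m ≥ N: 2m ∈ A ⟺ m ∉ A and 2m+1 ∈ A ⟺ m ∈ A. Then R_3(A,n) = R_3(ℕ\A, n) for all n ≥ 2N−1. -/

import Mathlib

/-- Thue–Morse set: nonnegative integers with an even number of binary ones. -/
def A0 : Set ℕ := {n : ℕ | Even ((Nat.digits 2 n).count 1)}

/-- Number of representations n = a + a', a < a', a, a' ∈ A. -/
noncomputable def R2 (A : Set ℕ) (n : ℕ) : ℕ :=
  {p : ℕ × ℕ | p.1 < p.2 ∧ p.1 + p.2 = n ∧ p.1 ∈ A ∧ p.2 ∈ A}.ncard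

/-- Number of representations n = a + a', a ≤ a', a, a' ∈ A. -/
noncomputable def R3 (A : Set ℕ) (n : ℕ) : ℕ :=
  {p : ℕ × ℕ | p.1 ≤ p.2 ∧ p.1 + p.2 = n ∧ p.1 ∈ A ∧ p.2 ∈ A}.ncard

/-- Number of ordered pairs (a,b), a ∈ A, b ∈ B, a + b = n. -/
noncomputable def RAB (A B : Set ℕ) (n : ℕ) : ℕ :=
  {p : ℕ × ℕ | p.1 + p.2 = n ∧ p.1 ∈ A ∧ p.2 ∈ B}.ncard

open Finset

open scoped Classical in
private lemma R3_eq_card (B : Set ℕ) (n : ℕ) :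
    R3 B n = ((Finset.range (n+1)).filter
      (fun a => 2*a ≤ n ∧ a ∈ B ∧ (n-a) ∈ B)).card := by
  have himg : {p : ℕ × ℕ | p.1 ≤ p.2 ∧ p.1 + p.2 = n ∧ p.1 ∈ B ∧ p.2 ∈ B}
      = (fun a => (a, n - a)) '' ((Finset.range (n+1)).filter
        (fun a => 2*a ≤ n ∧ a ∈ B ∧ (n-a) ∈ B) : Finset ℕ) := by
    ext ⟨a, b⟩
    simp only [Set.mem_setOf_eq, Set.mem_image, Finset.coe_filter,
      Finset.mem_range, Set.mem_setOf_eq, Prod.mk.injEq]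
    constructor
    · rintro ⟨h1, h2, h3, h4⟩
      exact ⟨a, ⟨by omega, by omega, h3, by rwa [show n - a = b by omega]⟩,
        rfl, by omega⟩
    · rintro ⟨x, ⟨hx1, hx2, hx3, hx4⟩, rfl, rfl⟩
      exact ⟨by omega, by omega, hx3, hx4⟩
  rw [R3, himg, Set.ncard_image_of_injective _ (fun x y h => (Prod.mk.injEq ..).mp h |>.1),
    Set.ncard_coe_finset]

open scoped Classical in
private lemma two_mul_R3 (B : Set ℕ) (n : ℕ) :
    2 * R3 B n = ((range (n+1)).filter (fun a => a ∈ B ∧ (n-a) ∈ B)).card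
      + (if 2*(n/2) = n ∧ (n/2) ∈ B then 1 else 0) := by
  rw [R3_eq_card]
  set s := (range (n+1)).filter (fun a => 2*a ≤ n ∧ a ∈ B ∧ (n-a) ∈ B) with hs
  set t := (range (n+1)).filter (fun a => n ≤ 2*a ∧ a ∈ B ∧ (n-a) ∈ B) with ht
  have hst : s.card = t.card := by
    apply card_nbij' (fun a => n - a) (fun a => n - a)
    · intro a ha
      simp only [hs, ht, mem_coe, mem_filter, mem_range] at *
      refine ⟨by omega, by omega, ha.2.2.2, ?_⟩
      rw [show n - (n - a) = a by omega]; exact ha.2.2.1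
    · intro a ha
      simp only [hs, ht, mem_coe, mem_filter, mem_range] at *
      refine ⟨by omega, by omega, ha.2.2.2, ?_⟩
      rw [show n - (n - a) = a by omega]; exact ha.2.2.1
    · intro a ha
      simp only [hs, mem_coe, mem_filter, mem_range] at ha ⊢
      omega
    · intro a ha
      simp only [ht, mem_coe, mem_filter, mem_range] at ha ⊢
      omega
  have hunion : s ∪ t = (range (n+1)).filter (fun a => a ∈ B ∧ (n-a) ∈ B) := by
    ext a
    simp only [hs, ht, mem_union, mem_filter, mem_range]
    constructor
    · rintro (⟨h1, _, h3⟩ | ⟨h1, _, h3⟩) <;> exact ⟨h1, h3⟩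
    · rintro ⟨h1, h3⟩
      rcases le_total (2*a) n with h | h
      · exact Or.inl ⟨h1, h, h3⟩
      · exact Or.inr ⟨h1, h, h3⟩
  have hinter : (s ∩ t).card = if 2*(n/2) = n ∧ (n/2) ∈ B then 1 else 0 := by
    have : s ∩ t = if 2*(n/2) = n ∧ (n/2) ∈ B then {n/2} else ∅ := by
      split_ifs with h
      · ext a
        simp only [hs, ht, mem_inter, mem_filter, mem_range, mem_singleton]
        constructor
        · rintro ⟨⟨h1, h2, _⟩, ⟨_, h4, _⟩⟩; omega
        · rintro rfl
          refine ⟨⟨by omega, by omega, h.2, ?_⟩, ⟨by omega, by omega, h.2, ?_⟩⟩ <;>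
            · rw [show n - n/2 = n/2 by omega]; exact h.2
      · ext a
        simp only [hs, ht, mem_inter, mem_filter, mem_range, notMem_empty, iff_false]
        rintro ⟨⟨h1, h2, h3, h4⟩, ⟨_, h6, _⟩⟩
        have ha : a = n/2 := by omega
        exact h ⟨by omega, ha ▸ h3⟩
    rw [this]
    split_ifs <;> simp
  have := card_union_add_card_inter s t
  rw [hunion, hinter] at this
  omega

open scoped Classical in
private lemma key_sum' (B : Set ℕ) (n : ℕ) :
    ((range (n+1)).filter (fun a => a ∈ B ∧ (n-a) ∈ B)).card + (n+1)
      = ((range (n+1)).filter (fun a => a ∉ B ∧ (n-a) ∉ B)).card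
        + 2 * ((range (n+1)).filter (fun a => a ∈ B)).card := by
  have hrefl : ((range (n+1)).filter (fun a => (n-a) ∈ B)).card
      = ((range (n+1)).filter (fun a => a ∈ B)).card := by
    apply card_nbij' (fun a => n - a) (fun a => n - a) <;>
      intro a ha <;> simp only [mem_coe, mem_filter, mem_range] at *
    · exact ⟨by omega, ha.2⟩
    · refine ⟨by omega, ?_⟩; rw [show n - (n - a) = a by omega]; exact ha.2
    · omega
    · omega
  have hsum : ∀ a : ℕ, ((if a ∈ B ∧ (n-a) ∈ B then 1 else 0) + 1 : ℕ)
      = (if a ∉ B ∧ (n-a) ∉ B then 1 else 0) + ((if a ∈ B then 1 else 0)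
        + (if (n-a) ∈ B then 1 else 0)) := by
    intro a
    by_cases h1 : a ∈ B <;> by_cases h2 : (n-a) ∈ B <;> simp [h1, h2]
  calc ((range (n+1)).filter (fun a => a ∈ B ∧ (n-a) ∈ B)).card + (n+1)
      = ∑ a ∈ range (n+1), ((if a ∈ B ∧ (n-a) ∈ B then 1 else 0) + 1) := by
        rw [sum_add_distrib, card_filter]; simp
    _ = ∑ a ∈ range (n+1), ((if a ∉ B ∧ (n-a) ∉ B then 1 else 0)
          + ((if a ∈ B then 1 else 0) + (if (n-a) ∈ B then 1 else 0))) :=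
        sum_congr rfl (fun a _ => hsum a)
    _ = ((range (n+1)).filter (fun a => a ∉ B ∧ (n-a) ∉ B)).card
        + 2 * ((range (n+1)).filter (fun a => a ∈ B)).card := by
        rw [sum_add_distrib, sum_add_distrib, ← card_filter, ← card_filter, ← card_filter,
          hrefl]
        ring

theorem stmt_18 (N : ℕ) (hN : 0 < N) (A : Set ℕ)
    (hcard : (A ∩ Set.Icc 0 (2 * N - 1)).ncard = N)
    (hrec : ∀ m, N ≤ m → ((2 * m ∈ A ↔ m ∉ A) ∧ (2 * m + 1 ∈ A ↔ m ∈ A))) :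
    ∀ n, 2 * N - 1 ≤ n → R3 A n = R3 Aᶜ n := by
  classical
  intro n hn
  set c : ℕ → ℕ := fun a => if a ∈ A then 1 else 0 with hc
  set F : ℕ → ℕ := fun k => ((range k).filter (fun a => a ∈ A)).card with hF
  have hFsucc : ∀ k, F (k+1) = F k + c k := by
    intro k
    simp only [hF, hc, range_add_one, filter_insert]
    split_ifs with h
    · rw [card_insert_of_notMem (by simp)]
    · rfl
  have hbase : F (2*N) = N := by
    have hset : A ∩ Set.Icc 0 (2*N-1) = ↑((range (2*N)).filter (fun a => a ∈ A)) := by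
      ext a
      simp only [Set.mem_inter_iff, Set.mem_Icc, coe_filter, mem_range, Set.mem_setOf_eq]
      constructor
      · rintro ⟨h1, _, h3⟩; exact ⟨by omega, h1⟩
      · rintro ⟨h1, h2⟩; exact ⟨h2, by omega, by omega⟩
    have : (A ∩ Set.Icc 0 (2*N-1)).ncard = F (2*N) := by
      rw [hset, Set.ncard_coe_finset]
    omega
  have hone : ∀ m, N ≤ m → c (2*m) + c (2*m+1) = 1 := by
    intro m hm
    obtain ⟨h1, h2⟩ := hrec m hm
    by_cases h : m ∈ A
    · have e1 : 2*m ∉ A := fun hh => (h1.mp hh) h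
      have e2 : 2*m+1 ∈ A := h2.mpr h
      simp [hc, e1, e2]
    · have e1 : 2*m ∈ A := h1.mpr h
      have e2 : 2*m+1 ∉ A := fun hh => h (h2.mp hh)
      simp [hc, e1, e2]
  have hF2step : ∀ k, F (k+2) = F k + c k + c (k+1) := by
    intro k
    have h1 : F (k+2) = F (k+1) + c (k+1) := hFsucc (k+1)
    have h2 := hFsucc k
    omega
  have fodd : ∀ m, N - 1 ≤ m → F (2*m+2) = m + 1 := by
    intro m hm
    induction m, hm using Nat.le_induction with
    | base =>
      rw [show 2*(N-1)+2 = 2*N by omega, hbase]; omega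
    | succ m hm ih =>
      have h1 := hone (m+1) (by omega)
      rw [show 2*(m+1) = 2*m+2 by ring] at h1
      rw [show 2*(m+1)+2 = (2*m+2)+2 by ring, hF2step, ih]
      omega
  have e1 := two_mul_R3 A n
  have e2 := two_mul_R3 Aᶜ n
  have e3 := key_sum' A n
  simp only [Set.mem_compl_iff] at e2
  have hFn : ((range (n+1)).filter (fun a => a ∈ A)).card = F (n+1) := rfl
  rw [hFn] at e3
  rcases Nat.even_or_odd n with he | ho
  · -- n even, n = 2*m with m ≥ N
    obtain ⟨m, hm⟩ : ∃ m, n = 2*m := by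
      obtain ⟨r, hr⟩ := he; exact ⟨r, by omega⟩
    have hmN : N ≤ m := by omega
    have hcm : c (2*m+1) = c m := by
      by_cases h : m ∈ A
      · have := (hrec m hmN).2.mpr h; simp [hc, h, this]
      · have : 2*m+1 ∉ A := fun hh => h ((hrec m hmN).2.mp hh)
        simp [hc, h, this]
    have hF2 : F (2*m+1) + c m = m + 1 := by
      have := hFsucc (2*m+1)
      rw [hcm, show 2*m+1+1 = 2*m+2 by ring] at this
      have h2 := fodd m (by omega)
      omega
    subst hm
    have hdiv : (2*m)/2 = m := by omega
    by_cases hmA : m ∈ A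
    · rw [if_pos ⟨by omega, by rw [hdiv]; exact hmA⟩] at e1
      rw [if_neg (fun h => (hdiv ▸ h.2 : m ∉ A) hmA)] at e2
      have hcmv : c m = 1 := by simp [hc, hmA]
      omega
    · rw [if_neg (fun h => hmA (hdiv ▸ h.2))] at e1
      rw [if_pos ⟨by omega, by rw [hdiv]; exact hmA⟩] at e2
      have hcmv : c m = 0 := by simp [hc, hmA]
      omega
  · -- n odd, n = 2*m+1 with m ≥ N-1
    obtain ⟨m, hm⟩ := ho
    have hmN : N - 1 ≤ m := by omega
    have hne : ¬ (2*(n/2) = n) := by omega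
    rw [if_neg (fun h => hne h.1)] at e1
    rw [if_neg (fun h => hne h.1)] at e2
    have hFv : F (n+1) = m + 1 := by
      rw [show n+1 = 2*m+2 by omega]; exact fodd m hmN
    omega
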